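/- arXiv:2601.06523 — 2 statements merged into one kernel-verified Lean document; each statement's English description precedes it below -/
import Mathlib

section
/- Let f : X → X be a homeomorphism of a compact metric space and C a chain component of f. If f has L-shadowing on B_b(C) for some b > 0, then C is clopen in CR(f). -/
open Metric Filter Topology Set

variable {X : Type*}

/-- `(c i)_{i=0}^k` is a `δ`-chain of `f` (up to index `k`). -/
def IsDeltaChain [MetricSpace X] (f : X → X) (δ : ℝ) (k : ℕ) (c : ℕ → X) : Prop :=
  ∀ i < k, dist (f (c i)) (c (i + 1)) ≤ δ

/-- `x → y` : for every `δ > 0` there is a `δ`-chain from `x` to `y`. -/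
def ChainReach [MetricSpace X] (f : X → X) (x y : X) : Prop :=
  ∀ δ > 0, ∃ k ≥ 1, ∃ c : ℕ → X, c 0 = x ∧ c k = y ∧ IsDeltaChain f δ k c

/-- The chain recurrent set. -/
def ChainRec [MetricSpace X] (f : X → X) : Set X := {x | ChainReach f x x}

/-- `C` is a chain component of `f`. -/
def IsChainComponent [MetricSpace X] (f : X → X) (C : Set X) : Prop :=
  ∃ x, ChainReach f x x ∧
    C = {y | ChainReach f y y ∧ ChainReach f x y ∧ ChainReach f y x}

/-- A set is chain stable iff points chain-reachable from it stay in it. -/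
def ChainStable [MetricSpace X] (f : X → X) (S : Set X) : Prop :=
  ∀ x ∈ S, ∀ y, ChainReach f x y → y ∈ S

/-- `S` is "initially stable": if `y → x` with `x ∈ S` then `y ∈ S`. -/
def InitialStable [MetricSpace X] (f : X → X) (S : Set X) : Prop :=
  ∀ x ∈ S, ∀ y, ChainReach f y x → y ∈ S

/-- `f` restricted to `Λ` is chain transitive. -/
def ChainTransitiveOn [MetricSpace X] (f : X → X) (Λ : Set X) : Prop :=
  ∀ p ∈ Λ, ∀ q ∈ Λ, ∀ δ > 0, ∃ k ≥ 1, ∃ c : ℕ → X,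
    c 0 = p ∧ c k = q ∧ (∀ i ≤ k, c i ∈ Λ) ∧ IsDeltaChain f δ k c

/-- `f` has shadowing on `S`. -/
def ShadowsOn [MetricSpace X] (f : X → X) (S : Set X) : Prop :=
  ∀ ε > 0, ∃ δ > 0, ∀ (k : ℕ) (c : ℕ → X), (∀ i ≤ k, c i ∈ S) →
    IsDeltaChain f δ k c → ∃ x, ∀ i ≤ k, dist (c i) (f^[i] x) ≤ ε

/-- Iterate of a homeomorphism indexed by `ℤ`. -/
def hIter [TopologicalSpace X] (f : X ≃ₜ X) (i : ℤ) : X → X :=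
  if 0 ≤ i then (⇑f)^[i.toNat] else (⇑f.symm)^[(-i).toNat]

/-- A `δ`-limit-pseudo orbit of the homeomorphism `f`. -/
def IsLimitPseudoOrbit [MetricSpace X] (f : X ≃ₜ X) (δ : ℝ) (ξ : ℤ → X) : Prop :=
  (∀ i : ℤ, dist (f (ξ i)) (ξ (i + 1)) ≤ δ) ∧
  Tendsto (fun i : ℤ => dist (f (ξ i)) (ξ (i + 1))) atBot (nhds 0) ∧
  Tendsto (fun i : ℤ => dist (f (ξ i)) (ξ (i + 1))) atTop (nhds 0)

/-- `f` has L-shadowing on `S`. -/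
def LShadowsOn [MetricSpace X] (f : X ≃ₜ X) (S : Set X) : Prop :=
  ∀ ε > 0, ∃ δ > 0, ∀ ξ : ℤ → X, (∀ i : ℤ, ξ i ∈ S) →
    IsLimitPseudoOrbit f δ ξ →
    ∃ x : X, (∀ i : ℤ, dist (ξ i) (hIter f i x) ≤ ε) ∧
      Tendsto (fun i : ℤ => dist (ξ i) (hIter f i x)) atBot (nhds 0) ∧
      Tendsto (fun i : ℤ => dist (ξ i) (hIter f i x)) atTop (nhds 0)

/-- `f` is expansive on `S`. -/
def ExpansiveOn [MetricSpace X] (f : X ≃ₜ X) (S : Set X) : Prop :=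
  ∃ e > 0, ∀ x y : X, (∀ i : ℤ, hIter f i x ∈ S) → (∀ i : ℤ, hIter f i y ∈ S) →
    (∀ i : ℤ, dist (hIter f i x) (hIter f i y) ≤ e) → x = y

/-- Closed `b`-neighborhood of `S`. -/
def Nbhd [MetricSpace X] (b : ℝ) (S : Set X) : Set X := {x | Metric.infDist x S ≤ b}

/-- Attractor for a continuous map `f`. -/
def IsAttractor [TopologicalSpace X] (f : X → X) (Λ : Set X) : Prop :=
  IsClosed Λ ∧ f '' Λ = Λ ∧
    ∃ U : Set X, IsOpen U ∧ f '' closure U ⊆ U ∧ Λ = ⋂ i : ℕ, f^[i] '' U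

/-- `f` is (topologically) mixing. -/
def IsMixing [TopologicalSpace X] (f : X → X) : Prop :=
  ∀ U V : Set X, IsOpen U → IsOpen V → U.Nonempty → V.Nonempty →
    ∃ j : ℕ, ∀ i ≥ j, (f^[i] '' U ∩ V).Nonempty

/-- The ω-limit set of `x` under `f`. -/
def OmegaSet [TopologicalSpace X] (f : X → X) (x : X) : Set X :=
  {y | ∃ φ : ℕ → ℕ, StrictMono φ ∧ Tendsto (fun j => f^[φ j] x) atTop (nhds y)}

/-- `M` is a minimal set for `f`. -/
def IsMinimalSet [TopologicalSpace X] (f : X → X) (M : Set X) : Prop :=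
  M.Nonempty ∧ IsClosed M ∧ f '' M ⊆ M ∧ ∀ x ∈ M, OmegaSet f x = M

section Chains

variable [MetricSpace X] {f : X → X} {δ δ' : ℝ} {k l : ℕ} {c d : ℕ → X}

lemma IsDeltaChain.mono (h : IsDeltaChain f δ k c) (hδ : δ ≤ δ') : IsDeltaChain f δ' k c :=
  fun i hi => (h i hi).trans hδ

lemma chain_append (hc : IsDeltaChain f δ k c) (hd : IsDeltaChain f δ l d) (hcd : c k = d 0) :
    IsDeltaChain f δ (k + l) (fun i => if i ≤ k then c i else d (i - k)) := by
  intro i hi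
  by_cases h : i < k
  · simp only [if_pos h.le, if_pos (show i + 1 ≤ k by omega)]
    exact hc i h
  · simp only [if_neg (show ¬ i + 1 ≤ k by omega)]
    by_cases h0 : i = k
    · rw [if_pos (show i ≤ k by omega), h0, hcd, show k + 1 - k = 1 by omega]
      exact hd 0 (by omega)
    · simp only [if_neg (show ¬ i ≤ k by omega), show i + 1 - k = (i - k) + 1 by omega]
      exact hd (i - k) (by omega)

lemma ChainReach.trans {x y z : X} (h1 : ChainReach f x y) (h2 : ChainReach f y z) :
    ChainReach f x z := by
  intro δ hδ
  obtain ⟨k, hk, c, hc0, hck, hc⟩ := h1 δ hδ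
  obtain ⟨l, hl, d, hd0, hdl, hd⟩ := h2 δ hδ
  refine ⟨k + l, by omega, _, ?_, ?_, chain_append hc hd (hck.trans hd0.symm)⟩
  · simp only [if_pos (Nat.zero_le k), hc0]
  · simp only [if_neg (show ¬ k + l ≤ k by omega), show k + l - k = l by omega, hdl]

lemma chain_swap (hc : IsDeltaChain f δ k c) (hk : 1 ≤ k) (x' y' : X) :
    IsDeltaChain f (δ + dist (f x') (f (c 0)) + dist (c k) y') k
      (fun i => if i = 0 then x' else if i = k then y' else c i) := by
  have hnn : (0:ℝ) ≤ dist (f x') (f (c 0)) := dist_nonneg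
  have hnn2 : (0:ℝ) ≤ dist (c k) y' := dist_nonneg
  set c' : ℕ → X := fun i => if i = 0 then x' else if i = k then y' else c i with hc'
  have hv : ∀ j, j ≠ 0 → j ≠ k → c' j = c j := by
    intro j h1 h2; simp only [hc', if_neg h1, if_neg h2]
  have hv0 : c' 0 = x' := by simp only [hc', if_pos rfl]
  have hvk : c' k = y' := by
    show (if k = 0 then x' else if k = k then y' else c k) = y'
    rw [if_neg (show k ≠ 0 by omega), if_pos rfl]
  intro i hi
  show dist (f (c' i)) (c' (i + 1)) ≤ _
  by_cases h0 : i = 0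
  · rw [h0, hv0]
    by_cases h1 : 0 + 1 = k
    · rw [show (0:ℕ) + 1 = k from h1, hvk]
      have h3 : dist (f x') y' ≤ dist (f x') (f (c 0)) + dist (f (c 0)) (c 1) + dist (c 1) y' :=
        dist_triangle4 _ _ _ _
      have h4 : c 1 = c k := by rw [← h1]
      rw [h4] at h3
      have h5 : dist (f (c 0)) (c k) ≤ δ := by rw [← h4]; simpa using hc 0 hk
      linarith
    · rw [hv (0 + 1) (by omega) (by omega)]
      have h3 : dist (f x') (c (0 + 1)) ≤ dist (f x') (f (c 0)) + dist (f (c 0)) (c (0 + 1)) :=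
        dist_triangle _ _ _
      linarith [hc 0 hk]
  · rw [hv i h0 (by omega)]
    by_cases h1 : i + 1 = k
    · rw [h1, hvk]
      have h3 : dist (f (c i)) y' ≤ dist (f (c i)) (c (i + 1)) + dist (c (i + 1)) y' :=
        dist_triangle _ _ _
      rw [h1] at h3
      have h5 : dist (f (c i)) (c k) ≤ δ := by rw [← h1]; exact hc i hi
      linarith
    · rw [hv (i + 1) (by omega) h1]
      linarith [hc i hi]

lemma chainReach_apply (f : X → X) (y : X) : ChainReach f y (f y) := by
  intro δ hδ
  refine ⟨1, le_refl 1, fun i => if i = 0 then y else f y, by simp, by simp, ?_⟩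
  intro i hi
  have : i = 0 := by omega
  subst this
  simp [hδ.le]

lemma chainReach_symm_apply (f : X ≃ₜ X) (y : X) : ChainReach (⇑f) (f.symm y) y := by
  intro δ hδ
  refine ⟨1, le_refl 1, fun i => if i = 0 then f.symm y else y, by simp, by simp, ?_⟩
  intro i hi
  have : i = 0 := by omega
  subst this
  simp [hδ.le]

end Chains

section UC

variable [MetricSpace X] [CompactSpace X]

lemma ucont {g : X → X} (hg : Continuous g) :
    ∀ δ > (0:ℝ), ∃ s > (0:ℝ), ∀ u v : X, dist u v ≤ s → dist (g u) (g v) ≤ δ := by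
  intro δ hδ
  have h := CompactSpace.uniformContinuous_of_continuous hg
  rw [Metric.uniformContinuous_iff] at h
  obtain ⟨s, hs, h⟩ := h δ hδ
  exact ⟨s / 2, by linarith, fun u v huv => (h (lt_of_le_of_lt huv (by linarith))).le⟩

/-- If `y → q` and `q → q` then `f y → q`. -/
lemma reach_image_left (f : X ≃ₜ X) {y q : X} (h : ChainReach (⇑f) y q)
    (hq : ChainReach (⇑f) q q) : ChainReach (⇑f) (f y) q := by
  intro δ hδ
  obtain ⟨s, hs, hsf⟩ := ucont f.continuous (δ / 2) (by linarith)
  set δ' := min (δ / 2) s with hδ'def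
  have hδ' : 0 < δ' := lt_min (by linarith) hs
  obtain ⟨k, hk, c, hc0, hck, hc⟩ := (h.trans hq) δ' hδ'
  -- upgrade length: k ≥ 2 by appending a q→q chain
  obtain ⟨l, hl, d, hd0, hdl, hd⟩ := hq δ' hδ'
  -- combined chain e : y → q of length k + l ≥ 2
  set e : ℕ → X := fun i => if i ≤ k then c i else d (i - k) with he
  have hce : IsDeltaChain (⇑f) δ' (k + l) e := chain_append hc hd (hck.trans hd0.symm)
  have he0 : e 0 = y := by simp [he, hc0]
  have hekl : e (k + l) = q := by
    simp [he, if_neg (show ¬ k + l ≤ k by omega), show k + l - k = l by omega, hdl]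
  set m := k + l with hm
  have hm2 : 2 ≤ m := by omega
  refine ⟨m - 1, by omega, fun j => if j = 0 then f y else e (j + 1), by simp, ?_, ?_⟩
  · simp only [if_neg (show m - 1 ≠ 0 by omega), show m - 1 + 1 = m by omega, hekl]
  · intro j hj
    by_cases hj0 : j = 0
    · subst hj0
      simp only [if_pos rfl, if_neg (one_ne_zero)]
      have h1 : dist (f (e 0)) (e 1) ≤ δ' := hce 0 (by omega)
      rw [he0] at h1
      have h2 : dist (f (f y)) (f (e 1)) ≤ δ / 2 := hsf _ _ (h1.trans (min_le_right _ _))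
      have h3 : dist (f (e 1)) (e 2) ≤ δ' := hce 1 (by omega)
      calc dist (f (f y)) (e (1 + 1)) ≤ dist (f (f y)) (f (e 1)) + dist (f (e 1)) (e 2) :=
            dist_triangle _ _ _
        _ ≤ δ / 2 + δ' := by linarith
        _ ≤ δ := by have := min_le_left (δ / 2) s; linarith
    · simp only [if_neg hj0, if_neg (show j + 1 ≠ 0 by omega)]
      have h1 : dist (f (e (j + 1))) (e (j + 1 + 1)) ≤ δ' := hce (j + 1) (by omega)
      have : δ' ≤ δ := (min_le_left _ _).trans (by linarith)
      linarith

/-- If `q → y` and `q → q` then `q → f⁻¹ y`. -/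
lemma reach_image_right (f : X ≃ₜ X) {y q : X} (h : ChainReach (⇑f) q y)
    (hq : ChainReach (⇑f) q q) : ChainReach (⇑f) q (f.symm y) := by
  intro δ hδ
  obtain ⟨s1, hs1, hs1f⟩ := ucont f.symm.continuous δ hδ
  obtain ⟨s2, hs2, hs2f⟩ := ucont f.continuous (s1 / 2) (by linarith)
  set δ' := min δ (min s2 (s1 / 2)) with hδ'def
  have hδ' : 0 < δ' := lt_min hδ (lt_min hs2 (by linarith))
  have hδ'δ : δ' ≤ δ := min_le_left _ _
  have hδ's2 : δ' ≤ s2 := (min_le_right _ _).trans (min_le_left _ _)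
  have hδ's1 : δ' ≤ s1 / 2 := (min_le_right _ _).trans (min_le_right _ _)
  obtain ⟨l, hl, d, hd0, hdl, hd⟩ := hq δ' hδ'
  obtain ⟨k, hk, c0, hc00, hc0k, hc0c⟩ := h δ' hδ'
  set e : ℕ → X := fun i => if i ≤ l then d i else c0 (i - l) with he
  have hce : IsDeltaChain (⇑f) δ' (l + k) e := chain_append hd hc0c (hdl.trans hc00.symm)
  have he0 : e 0 = q := by simp [he, hd0]
  have hekl : e (l + k) = y := by
    simp [he, if_neg (show ¬ l + k ≤ l by omega), show l + k - l = k by omega, hc0k]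
  set m := l + k with hm
  have hm2 : 2 ≤ m := by omega
  refine ⟨m - 1, by omega, fun j => if j = m - 1 then f.symm y else e j, ?_, by simp, ?_⟩
  · simp only [if_neg (show 0 ≠ m - 1 by omega), he0]
  · intro j hj
    by_cases hj1 : j + 1 = m - 1
    · simp only [if_neg (show j ≠ m - 1 by omega), if_pos hj1]
      -- dist (f (e j)) (f.symm y) with j = m - 2
      have h1 : dist (f (e j)) (e (j + 1)) ≤ δ' := hce j (by omega)
      have h2 : dist (f (e (j + 1))) (e (j + 1 + 1)) ≤ δ' := hce (j + 1) (by omega)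
      have h3 : e (j + 1 + 1) = y := by rw [show j + 1 + 1 = m by omega]; exact hekl
      rw [h3] at h2
      have h4 : dist (f (f (e j))) (f (e (j + 1))) ≤ s1 / 2 := hs2f _ _ (h1.trans hδ's2)
      have h5 : dist (f (f (e j))) y ≤ s1 :=
        (dist_triangle _ _ _).trans (by linarith [h2.trans hδ's1])
      have h6 : dist (f.symm (f (f (e j)))) (f.symm y) ≤ δ := hs1f _ _ h5
      rwa [f.symm_apply_apply] at h6
    · simp only [if_neg (show j ≠ m - 1 by omega), if_neg hj1]
      exact (hce j (by omega)).trans hδ'δ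

end UC

/-- The chain class of `p`. -/
def Cset [MetricSpace X] (f : X ≃ₜ X) (p : X) : Set X :=
  {y | ChainReach (⇑f) y y ∧ ChainReach (⇑f) p y ∧ ChainReach (⇑f) y p}

section CsetFacts

variable [MetricSpace X] [CompactSpace X]

lemma mem_Cset_self {f : X ≃ₜ X} {p : X} (hp : ChainReach (⇑f) p p) : p ∈ Cset f p := ⟨hp, hp, hp⟩

lemma isClosed_Cset (f : X ≃ₜ X) (p : X) : IsClosed (Cset f p) := by
  apply isClosed_of_closure_subset
  intro y hy
  rw [Metric.mem_closure_iff] at hy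
  have hpy : ChainReach (⇑f) p y := by
    intro δ hδ
    obtain ⟨y', hy', hd⟩ := hy (δ / 2) (by linarith)
    obtain ⟨k, hk, c, hc0, hck, hc⟩ := hy'.2.1 (δ / 2) (by linarith)
    refine ⟨k, hk, _, ?_, ?_, (chain_swap hc hk (c 0) y).mono ?_⟩
    · simp [hc0]
    · simp [show k ≠ 0 by omega]
    · have e1 : dist (f (c 0)) (f (c 0)) = 0 := dist_self _
      have e2 : dist (c k) y ≤ δ / 2 := by rw [hck, dist_comm]; exact hd.le
      linarith
  have hyp2 : ChainReach (⇑f) y p := by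
    intro δ hδ
    obtain ⟨s, hs, hsf⟩ := ucont f.continuous (δ / 2) (by linarith)
    obtain ⟨y', hy', hd⟩ := hy (min (δ / 2) s) (lt_min (by linarith) hs)
    obtain ⟨k, hk, c, hc0, hck, hc⟩ := hy'.2.2 (δ / 2) (by linarith)
    refine ⟨k, hk, _, ?_, ?_, (chain_swap hc hk y (c k)).mono ?_⟩
    · simp
    · simp [hck, show k ≠ 0 by omega]
    · have e1 : dist (f y) (f (c 0)) ≤ δ / 2 := by
        apply hsf
        rw [hc0]
        exact hd.le.trans (min_le_right _ _)
      have e2 : dist (c k) (c k) = 0 := dist_self _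
      have e3 : dist y y' ≤ δ / 2 := hd.le.trans (min_le_left _ _)
      linarith
  exact ⟨hyp2.trans hpy, hpy, hyp2⟩

lemma Cset_apply_mem (f : X ≃ₜ X) {p y : X} (hy : y ∈ Cset f p) : f y ∈ Cset f p := by
  have hpp : ChainReach (⇑f) p p := hy.2.1.trans hy.2.2
  have h1 : ChainReach (⇑f) p (f y) := hy.2.1.trans (chainReach_apply (⇑f) y)
  have h2 : ChainReach (⇑f) (f y) p := reach_image_left f hy.2.2 hpp
  exact ⟨h2.trans h1, h1, h2⟩

lemma Cset_symm_mem (f : X ≃ₜ X) {p y : X} (hy : y ∈ Cset f p) : f.symm y ∈ Cset f p := by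
  have hpp : ChainReach (⇑f) p p := hy.2.1.trans hy.2.2
  have h2 : ChainReach (⇑f) (f.symm y) p := (chainReach_symm_apply f y).trans hy.2.2
  have h1 : ChainReach (⇑f) p (f.symm y) := reach_image_right f hy.2.1 hpp
  exact ⟨h2.trans h1, h1, h2⟩

lemma Cset_iter_mem (f : X ≃ₜ X) {p y : X} (hy : y ∈ Cset f p) (m : ℕ) :
    (⇑f)^[m] y ∈ Cset f p := by
  induction m with
  | zero => simpa using hy
  | succ n ih => rw [Function.iterate_succ_apply']; exact Cset_apply_mem f ih

lemma Cset_symm_iter_mem (f : X ≃ₜ X) {p y : X} (hy : y ∈ Cset f p) (m : ℕ) :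
    (⇑f.symm)^[m] y ∈ Cset f p := by
  induction m with
  | zero => simpa using hy
  | succ n ih => rw [Function.iterate_succ_apply']; exact Cset_symm_mem f ih

/-- Points on small chains whose endpoints are near `Cset` stay near `Cset`. -/
lemma lemA (f : X ≃ₜ X) (p : X) (hp : ChainReach (⇑f) p p) {a : ℝ} (ha : 0 < a) :
    ∃ γ > 0, ∀ k (c : ℕ → X), IsDeltaChain (⇑f) γ k c →
      infDist (c 0) (Cset f p) ≤ γ → infDist (c k) (Cset f p) ≤ γ →
      ∀ i ≤ k, infDist (c i) (Cset f p) ≤ a := by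
  have hCne : (Cset f p).Nonempty := ⟨p, mem_Cset_self hp⟩
  have hCc : IsCompact (Cset f p) := (isClosed_Cset f p).isCompact
  by_contra hcon
  push_neg at hcon
  have hsel : ∀ n : ℕ, ∃ k, ∃ c : ℕ → X, IsDeltaChain (⇑f) ((1:ℝ)/(n+1)) k c ∧
      infDist (c 0) (Cset f p) ≤ (1:ℝ)/(n+1) ∧ infDist (c k) (Cset f p) ≤ (1:ℝ)/(n+1) ∧
      ∃ i, i ≤ k ∧ a < infDist (c i) (Cset f p) := by
    intro n
    have hpos : (0:ℝ) < 1/(n+1) := by positivity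
    exact hcon _ hpos
  choose k c hchain h0 hk2 idx hidx hfar using hsel
  obtain ⟨y, -, φ, hφ, hlim⟩ :=
    isCompact_univ.tendsto_subseq (x := fun n => c n (idx n)) (fun n => mem_univ _)
  have hlim' := hlim
  rw [Metric.tendsto_atTop] at hlim'
  -- small 1/(n+1) for large n
  have hsmall : ∀ t : ℝ, 0 < t → ∃ N : ℕ, ∀ n ≥ N, (1:ℝ)/(n+1) < t := by
    intro t ht
    obtain ⟨N, hN⟩ := exists_nat_one_div_lt ht
    refine ⟨N, fun n hn => lt_of_le_of_lt ?_ hN⟩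
    apply one_div_le_one_div_of_le (by positivity)
    have : (N:ℝ) ≤ n := by exact_mod_cast hn
    linarith
  have claim1 : ChainReach (⇑f) p y := by
    intro δ hδ
    obtain ⟨s, hs, hsf⟩ := ucont f.continuous (δ/3) (by linarith)
    have htpos : (0:ℝ) < min (min (δ/3) s) a := lt_min (lt_min (by linarith) hs) ha
    obtain ⟨N, hN⟩ := hsmall _ htpos
    obtain ⟨M, hM⟩ := hlim' (δ/3) (by linarith)
    have hdy0 := hM (max N M) (le_max_right N M)
    set n := φ (max N M) with hn
    have hdy : dist (c n (idx n)) y < δ/3 := hdy0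
    have hφn : N ≤ n := le_trans (le_max_left _ _) hφ.le_apply
    have hnsmall : (1:ℝ)/(n+1) < min (min (δ/3) s) a := hN n hφn
    obtain ⟨w1, hw1C, hw1⟩ := hCc.exists_infDist_eq_dist hCne (c n 0)
    have hw1d : dist (c n 0) w1 ≤ (1:ℝ)/(n+1) := by rw [← hw1]; exact h0 n
    have hidx1 : 1 ≤ idx n := by
      rcases Nat.eq_zero_or_pos (idx n) with h | h
      · exfalso
        have h1 := hfar n
        rw [h] at h1
        have h2 := h0 n
        have h3 : (1:ℝ)/(n+1) < a := lt_of_lt_of_le hnsmall (min_le_right _ _)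
        linarith
      · exact h
    obtain ⟨k1, hk1, c1, hc10, hc1k, hc1⟩ := hw1C.2.1 δ hδ
    have hrestr : IsDeltaChain (⇑f) ((1:ℝ)/(n+1)) (idx n) (c n) :=
      fun i hi => hchain n i (lt_of_lt_of_le hi (hidx n))
    have hsw := chain_swap hrestr hidx1 w1 y
    have hbd : (1:ℝ)/(n+1) + dist (f w1) (f (c n 0)) + dist (c n (idx n)) y ≤ δ := by
      have e1 : dist (f w1) (f (c n 0)) ≤ δ/3 := by
        apply hsf
        rw [dist_comm]
        exact hw1d.trans (le_of_lt (lt_of_lt_of_le hnsmall ((min_le_left _ _).trans (min_le_right _ _))))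
      have e2 : (1:ℝ)/(n+1) ≤ δ/3 :=
        le_of_lt (lt_of_lt_of_le hnsmall ((min_le_left _ _).trans (min_le_left _ _)))
      linarith
    refine ⟨k1 + idx n, by omega, _, ?_, ?_, chain_append hc1 (hsw.mono hbd) ?_⟩
    · simp [hc10]
    · simp [show ¬ k1 + idx n ≤ k1 by omega, show k1 + idx n - k1 = idx n by omega,
        show idx n ≠ 0 by omega]
    · simp [hc1k]
  have claim2 : ChainReach (⇑f) y p := by
    intro δ hδ
    obtain ⟨s, hs, hsf⟩ := ucont f.continuous (δ/3) (by linarith)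
    have htpos : (0:ℝ) < min (δ/3) a := lt_min (by linarith) ha
    obtain ⟨N, hN⟩ := hsmall _ htpos
    obtain ⟨M, hM⟩ := hlim' (min (δ/3) s) (lt_min (by linarith) hs)
    have hdy0 := hM (max N M) (le_max_right N M)
    set n := φ (max N M) with hn
    have hdy : dist (c n (idx n)) y < min (δ/3) s := hdy0
    have hφn : N ≤ n := le_trans (le_max_left _ _) hφ.le_apply
    have hnsmall : (1:ℝ)/(n+1) < min (δ/3) a := hN n hφn
    have hidxk : idx n < k n := by
      rcases Nat.lt_or_ge (idx n) (k n) with h | h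
      · exact h
      · exfalso
        have h1 : idx n = k n := le_antisymm (hidx n) h
        have h2 := hfar n
        rw [h1] at h2
        have h3 := hk2 n
        have h4 : (1:ℝ)/(n+1) < a := lt_of_lt_of_le hnsmall (min_le_right _ _)
        linarith
    set l := k n - idx n with hl
    have hl1 : 1 ≤ l := by omega
    have hd : IsDeltaChain (⇑f) ((1:ℝ)/(n+1)) l (fun j => c n (idx n + j)) := by
      intro j hj
      show dist (f (c n (idx n + j))) (c n (idx n + (j + 1))) ≤ _
      rw [show idx n + (j + 1) = idx n + j + 1 by omega]
      exact hchain n _ (by omega)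
    obtain ⟨w2, hw2C, hw2⟩ := hCc.exists_infDist_eq_dist hCne (c n (k n))
    have hw2d : dist (c n (k n)) w2 ≤ (1:ℝ)/(n+1) := by rw [← hw2]; exact hk2 n
    obtain ⟨k2, hk21, c2, hc20, hc2k, hc2⟩ := hw2C.2.2 δ hδ
    have hsw := chain_swap hd hl1 y w2
    have hbd : (1:ℝ)/(n+1) + dist (f y) (f (c n (idx n + 0))) + dist (c n (idx n + l)) w2 ≤ δ := by
      have e1 : dist (f y) (f (c n (idx n + 0))) ≤ δ/3 := by
        apply hsf
        rw [show idx n + 0 = idx n by omega, dist_comm]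
        exact hdy.le.trans (min_le_right _ _)
      have e2 : dist (c n (idx n + l)) w2 ≤ (1:ℝ)/(n+1) := by
        rw [show idx n + l = k n by omega]
        exact hw2d
      have e3 : (1:ℝ)/(n+1) ≤ δ/3 := le_of_lt (lt_of_lt_of_le hnsmall (min_le_left _ _))
      linarith
    refine ⟨l + k2, by omega, _, ?_, ?_, chain_append (hsw.mono hbd) hc2 ?_⟩
    · simp
    · simp [show ¬ l + k2 ≤ l by omega, show l + k2 - l = k2 by omega, hc2k]
    · simp [show l ≠ 0 by omega, hc20]
  have hyC : y ∈ Cset f p := ⟨claim2.trans claim1, claim1, claim2⟩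
  have h1 : Tendsto (fun m => infDist ((fun n => c n (idx n)) (φ m)) (Cset f p)) atTop
      (𝓝 (infDist y (Cset f p))) := ((continuous_infDist_pt _).tendsto y).comp hlim
  have h2 : a ≤ infDist y (Cset f p) :=
    ge_of_tendsto h1 (Filter.Eventually.of_forall fun m => (hfar (φ m)).le)
  rw [infDist_zero_of_mem hyC] at h2
  linarith

end CsetFacts

section Concat

def csum (L : ℕ → ℕ) : ℕ → ℕ
  | 0 => 0
  | n+1 => csum L n + L n

lemma csum_succ (L : ℕ → ℕ) (n : ℕ) : csum L (n+1) = csum L n + L n := rfl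

lemma csum_le_csum (L : ℕ → ℕ) {m n : ℕ} (h : m ≤ n) : csum L m ≤ csum L n := by
  induction h with
  | refl => exact le_refl _
  | step h ih => exact ih.trans (by rw [csum_succ]; omega)

lemma self_le_csum {L : ℕ → ℕ} (hL : ∀ n, 1 ≤ L n) : ∀ n, n ≤ csum L n := by
  intro n
  induction n with
  | zero => exact Nat.zero_le _
  | succ n ih => have := hL n; rw [csum_succ]; omega

def blk (L : ℕ → ℕ) (i : ℕ) : ℕ := Nat.findGreatest (fun n => csum L n ≤ i) i

lemma csum_blk_le (L : ℕ → ℕ) (i : ℕ) : csum L (blk L i) ≤ i :=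
  Nat.findGreatest_spec (P := fun n => csum L n ≤ i) (Nat.zero_le i)
    (by show csum L 0 ≤ i; simp [csum])

lemma lt_csum_blk {L : ℕ → ℕ} (hL : ∀ n, 1 ≤ L n) (i : ℕ) : i < csum L (blk L i + 1) := by
  by_contra h
  push_neg at h
  have h1 : blk L i + 1 ≤ i := le_trans (self_le_csum hL _) h
  have h2 : blk L i + 1 ≤ blk L i := Nat.le_findGreatest h1 h
  omega

lemma le_blk {L : ℕ → ℕ} (hL : ∀ n, 1 ≤ L n) {n i : ℕ} (h : csum L n ≤ i) : n ≤ blk L i :=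
  Nat.le_findGreatest (le_trans (self_le_csum hL n) h) h

lemma blk_eq {L : ℕ → ℕ} (hL : ∀ n, 1 ≤ L n) {n i : ℕ}
    (h1 : csum L n ≤ i) (h2 : i < csum L (n+1)) : blk L i = n := by
  have ha := le_blk hL h1
  by_contra hne
  have hb : n + 1 ≤ blk L i := by omega
  have hc := csum_le_csum L hb
  have hd := csum_blk_le L i
  omega

def concatC (L : ℕ → ℕ) (c : ℕ → ℕ → X) (i : ℕ) : X := c (blk L i) (i - csum L (blk L i))

lemma concatC_key {L : ℕ → ℕ} (hL : ∀ n, 1 ≤ L n) {c : ℕ → ℕ → X}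
    (hmatch : ∀ n, c n (L n) = c (n+1) 0) (i : ℕ) :
    ∃ l, l < L (blk L i) ∧ concatC L c i = c (blk L i) l ∧
      concatC L c (i+1) = c (blk L i) (l + 1) := by
  set n := blk L i with hn
  have h1 : csum L n ≤ i := csum_blk_le L i
  have h2 : i < csum L (n+1) := lt_csum_blk hL i
  have h2' : csum L (n+1) = csum L n + L n := csum_succ L n
  refine ⟨i - csum L n, by omega, rfl, ?_⟩
  by_cases hb : i + 1 < csum L (n+1)
  · have hbe : blk L (i+1) = n := blk_eq hL (by omega) hb
    show c (blk L (i+1)) (i + 1 - csum L (blk L (i+1))) = _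
    rw [hbe]
    congr 1
    omega
  · have hib : i + 1 = csum L (n+1) := by omega
    have hbe : blk L (i+1) = n + 1 := by
      apply blk_eq hL (by omega)
      have h3 : csum L (n+1+1) = csum L (n+1) + L (n+1) := csum_succ L (n+1)
      have := hL (n+1)
      omega
    show c (blk L (i+1)) (i + 1 - csum L (blk L (i+1))) = _
    rw [hbe, hib, Nat.sub_self, ← hmatch n]
    congr 1
    omega

lemma concatC_csum {L : ℕ → ℕ} (hL : ∀ n, 1 ≤ L n) (c : ℕ → ℕ → X) (n : ℕ) :
    concatC L c (csum L n) = c n 0 := by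
  have hbe : blk L (csum L n) = n := by
    apply blk_eq hL (le_refl _)
    have := csum_succ L n
    have := hL n
    omega
  show c (blk L (csum L n)) (csum L n - csum L (blk L (csum L n))) = _
  rw [hbe, Nat.sub_self]

end Concat

section HIterFacts

variable [MetricSpace X]

lemma hIter_zero (f : X ≃ₜ X) (x : X) : hIter f 0 x = x := by
  simp [hIter]

lemma hIter_succ (f : X ≃ₜ X) (i : ℤ) (x : X) : hIter f (i+1) x = f (hIter f i x) := by
  unfold hIter
  by_cases h : 0 ≤ i
  · rw [if_pos h, if_pos (show (0:ℤ) ≤ i + 1 by omega)]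
    show (⇑f)^[(i+1).toNat] x = f ((⇑f)^[i.toNat] x)
    rw [show (i+1).toNat = i.toNat + 1 by omega, Function.iterate_succ_apply']
  · rw [if_neg h]
    by_cases h1 : 0 ≤ i + 1
    · rw [if_pos h1]
      have hi : i = -1 := by omega
      subst hi
      show (⇑f)^[((-1:ℤ)+1).toNat] x = f ((⇑f.symm)^[(-(-1:ℤ)).toNat] x)
      norm_num
    · rw [if_neg h1]
      have hm : (-i).toNat = (-(i+1)).toNat + 1 := by omega
      rw [hm, Function.iterate_succ_apply', Homeomorph.apply_symm_apply]

end HIterFacts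

section Extract

variable [MetricSpace X] [CompactSpace X]

lemma reach_of_forward (f : X ≃ₜ X) {x z : X}
    (h : ∀ δ > (0:ℝ), ∃ t : ℤ, 1 ≤ t ∧ dist z (hIter f t x) ≤ δ) : ChainReach (⇑f) x z := by
  intro δ hδ
  obtain ⟨t, ht, hdist⟩ := h δ hδ
  refine ⟨t.toNat, by omega, fun j => if j = t.toNat then z else hIter f (j:ℤ) x, ?_, by simp, ?_⟩
  · simp only [if_neg (show (0:ℕ) ≠ t.toNat by omega), Nat.cast_zero]
    exact hIter_zero f x
  · intro j hj
    by_cases hjt : j + 1 = t.toNat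
    · simp only [if_neg (show j ≠ t.toNat by omega), if_pos hjt]
      have he : f (hIter f (j:ℤ) x) = hIter f t x := by
        rw [← hIter_succ]
        congr 1
        omega
      rw [he, dist_comm]
      exact hdist
    · simp only [if_neg (show j ≠ t.toNat by omega), if_neg hjt]
      have he : f (hIter f (j:ℤ) x) = hIter f ((j+1 : ℕ):ℤ) x := by
        rw [show ((j+1 : ℕ):ℤ) = (j:ℤ) + 1 by push_cast; ring, hIter_succ]
      rw [he]
      simp [hδ.le]

lemma reach_of_forward' (f : X ≃ₜ X) {y q : X}
    (h : ∀ δ > (0:ℝ), ∃ t : ℤ, 1 ≤ t ∧ ∃ u, ChainReach (⇑f) u q ∧ dist u (hIter f t y) ≤ δ) :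
    ChainReach (⇑f) y q := by
  intro δ hδ
  obtain ⟨t, ht, u, hu, hdist⟩ := h δ hδ
  obtain ⟨k2, hk2, c2, hc20, hc2k, hc2⟩ := hu δ hδ
  have hch : IsDeltaChain (⇑f) δ t.toNat (fun j => if j = t.toNat then u else hIter f (j:ℤ) y) := by
    intro j hj
    by_cases hjt : j + 1 = t.toNat
    · simp only [if_neg (show j ≠ t.toNat by omega), if_pos hjt]
      have he : f (hIter f (j:ℤ) y) = hIter f t y := by
        rw [← hIter_succ]; congr 1; omega
      rw [he, dist_comm]
      exact hdist
    · simp only [if_neg (show j ≠ t.toNat by omega), if_neg hjt]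
      have he : f (hIter f (j:ℤ) y) = hIter f ((j+1 : ℕ):ℤ) y := by
        rw [show ((j+1 : ℕ):ℤ) = (j:ℤ) + 1 by push_cast; ring, hIter_succ]
      rw [he]
      simp [hδ.le]
  refine ⟨t.toNat + k2, by omega, _, ?_, ?_, chain_append hch hc2 ?_⟩
  · simp only [if_pos (Nat.zero_le _), if_neg (show (0:ℕ) ≠ t.toNat by omega), Nat.cast_zero]
    exact hIter_zero f y
  · simp [show ¬ (t.toNat + k2 ≤ t.toNat) by omega, show t.toNat + k2 - t.toNat = k2 by omega, hc2k]
  · simp [hc20]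

lemma reach_of_backward (f : X ≃ₜ X) {x q : X}
    (h : ∀ δ > (0:ℝ), ∃ t : ℤ, t ≤ -1 ∧ ∃ u, ChainReach (⇑f) q u ∧ dist u (hIter f t x) ≤ δ) :
    ChainReach (⇑f) q x := by
  intro δ hδ
  obtain ⟨s, hs, hsf⟩ := ucont f.continuous δ hδ
  obtain ⟨t, ht, u, hu, hdist⟩ := h (min s δ) (lt_min hs hδ)
  obtain ⟨k1, hk1, c1, hc10, hc1k, hc1⟩ := hu δ hδ
  set m := (-t).toNat with hm
  have hm1 : 1 ≤ m := by omega
  have hch : IsDeltaChain (⇑f) δ m (fun j => if j = 0 then u else hIter f (t + j) x) := by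
    intro j hj
    by_cases hj0 : j = 0
    · subst hj0
      simp only [if_pos rfl, if_neg one_ne_zero]
      have he : t + ((0+1 : ℕ) : ℤ) = t + 1 := by push_cast; ring
      rw [he, hIter_succ]
      exact hsf _ _ (hdist.trans (min_le_left _ _))
    · simp only [if_neg hj0, if_neg (show j + 1 ≠ 0 by omega)]
      have he : t + ((j+1 : ℕ) : ℤ) = (t + j) + 1 := by push_cast; ring
      rw [he, hIter_succ]
      simp [hδ.le]
  refine ⟨k1 + m, by omega, _, ?_, ?_, chain_append hc1 hch ?_⟩
  · simp [hc10]
  · simp only [if_neg (show ¬ k1 + m ≤ k1 by omega), show k1 + m - k1 = m by omega,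
      if_neg (show m ≠ 0 by omega)]
    have he : t + (m:ℤ) = 0 := by omega
    rw [he, hIter_zero]
  · simp [hc1k]

end Extract

section Main

variable [MetricSpace X] [CompactSpace X]

lemma real_dist_zero {r : ℝ} (h : 0 ≤ r) : dist r 0 = r := by
  rw [Real.dist_0_eq_abs, abs_of_nonneg h]

lemma main_open (f : X ≃ₜ X) (p : X) (hp : ChainReach (⇑f) p p)
    {b : ℝ} (hb : 0 < b) (hL : LShadowsOn f (Nbhd b (Cset f p))) :
    ∃ η > 0, ∀ z : X, ChainReach (⇑f) z z → infDist z (Cset f p) < η → z ∈ Cset f p := by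
  have hCne : (Cset f p).Nonempty := ⟨p, mem_Cset_self hp⟩
  have hCc : IsCompact (Cset f p) := (isClosed_Cset f p).isCompact
  obtain ⟨δ, hδ, hshad⟩ := hL b hb
  obtain ⟨γ, hγ, hA⟩ := lemA f p hp hb
  set δ₀ := min γ δ with hδ₀def
  have hδ₀ : 0 < δ₀ := lt_min hγ hδ
  have hδ₀γ : δ₀ ≤ γ := min_le_left _ _
  have hδ₀δ : δ₀ ≤ δ := min_le_right _ _
  obtain ⟨s, hs, hsf⟩ := ucont f.continuous δ₀ hδ₀
  have hsmall2 : ∀ t : ℝ, 0 < t → ∃ N : ℕ, δ₀/((N:ℝ)+1) < t := by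
    intro t ht
    obtain ⟨N, hN⟩ := exists_nat_one_div_lt (div_pos ht hδ₀)
    refine ⟨N, ?_⟩
    calc δ₀/((N:ℝ)+1) = δ₀ * (1/((N:ℝ)+1)) := by ring
      _ < δ₀ * (t/δ₀) := by exact mul_lt_mul_of_pos_left hN hδ₀
      _ = t := by field_simp
  refine ⟨min δ₀ s, lt_min hδ₀ hs, ?_⟩
  intro z hz hzC
  obtain ⟨w, hwC, hwd⟩ := hCc.exists_infDist_eq_dist hCne z
  have hzw : dist z w < min δ₀ s := by rw [← hwd]; exact hzC
  have hzγ : infDist z (Cset f p) ≤ γ :=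
    le_of_lt (lt_of_lt_of_le hzC ((min_le_left _ _).trans hδ₀γ))
  -- the chains z → z
  have hsel : ∀ n : ℕ, ∃ k, 1 ≤ k ∧ ∃ c : ℕ → X, c 0 = z ∧ c k = z ∧
      IsDeltaChain (⇑f) (δ₀/((n:ℝ)+1)) k c := by
    intro n
    obtain ⟨k, hk, c, h1, h2, h3⟩ := hz (δ₀/((n:ℝ)+1)) (by positivity)
    exact ⟨k, hk, c, h1, h2, h3⟩
  choose k hk c hc0 hck hchain using hsel
  have hediv : ∀ n : ℕ, δ₀/((n:ℝ)+1) ≤ δ₀ := by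
    intro n
    apply div_le_self hδ₀.le
    have : (0:ℝ) ≤ (n:ℝ) := Nat.cast_nonneg n
    linarith
  have hnear : ∀ n, ∀ j ≤ k n, infDist (c n j) (Cset f p) ≤ b := by
    intro n j hj
    refine hA (k n) (c n) ((hchain n).mono ((hediv n).trans hδ₀γ)) ?_ ?_ j hj
    · rw [hc0 n]; exact hzγ
    · rw [hck n]; exact hzγ
  set L := fun n => k n with hLdef
  have hL1 : ∀ n, 1 ≤ L n := hk
  have hmatch : ∀ n, c n (L n) = c (n+1) 0 := by
    intro n; rw [show L n = k n from rfl, hck n, hc0 (n+1)]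
  -- ================== Part 1 : ChainReach p z ==================
  have hpz : ChainReach (⇑f) p z := by
    set ξ : ℤ → X := fun i => if i ≤ 0 then (⇑f.symm)^[(1 - i).toNat] w
      else concatC L c (i - 1).toNat with hξdef
    have hvneg : ∀ i : ℤ, i ≤ 0 → ξ i = (⇑f.symm)^[(1 - i).toNat] w := by
      intro i hi; simp only [hξdef]; rw [if_pos hi]
    have hvpos : ∀ i : ℤ, 1 ≤ i → ξ i = concatC L c (i - 1).toNat := by
      intro i hi; simp only [hξdef]; rw [if_neg (by omega)]
    -- values in the b-neighborhood
    have hmem : ∀ i : ℤ, ξ i ∈ Nbhd b (Cset f p) := by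
      intro i
      show infDist (ξ i) (Cset f p) ≤ b
      by_cases hi : i ≤ 0
      · rw [hvneg i hi, infDist_zero_of_mem (Cset_symm_iter_mem f hwC _)]
        exact hb.le
      · rw [hvpos i (by omega)]
        obtain ⟨l, hl, e1, -⟩ := concatC_key hL1 hmatch (i - 1).toNat
        rw [e1]
        exact hnear _ l (le_of_lt hl)
    -- step bounds
    have hneg : ∀ i : ℤ, i ≤ -1 → ξ (i+1) = f (ξ i) := by
      intro i hi
      rw [hvneg i (by omega), hvneg (i+1) (by omega),
        show (1 - i).toNat = (1 - (i+1)).toNat + 1 by omega,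
        Function.iterate_succ_apply', Homeomorph.apply_symm_apply]
    have hjun : dist (f (ξ 0)) (ξ 1) ≤ min δ₀ s := by
      rw [hvneg 0 (by omega), hvpos 1 (by omega)]
      have e1 : ((1:ℤ) - 0).toNat = 1 := by omega
      have e2 : ((1:ℤ) - 1).toNat = 0 := by omega
      rw [e1, e2]
      have e3 : concatC L c 0 = c 0 0 := by
        have := concatC_csum hL1 c 0
        rwa [show csum L 0 = 0 from rfl] at this
      rw [e3, hc0 0]
      show dist (f ((⇑f.symm)^[1] w)) z ≤ _
      rw [show (⇑f.symm)^[1] w = f.symm w from rfl, Homeomorph.apply_symm_apply, dist_comm]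
      exact hzw.le
    have hpos : ∀ i : ℤ, 1 ≤ i →
        dist (f (ξ i)) (ξ (i+1)) ≤ δ₀ / ((blk L (i-1).toNat : ℝ) + 1) := by
      intro i hi
      rw [hvpos i hi, hvpos (i+1) (by omega),
        show (i + 1 - 1).toNat = (i-1).toNat + 1 by omega]
      obtain ⟨l, hl, e1, e2⟩ := concatC_key hL1 hmatch (i-1).toNat
      rw [e1, e2]
      exact hchain _ l hl
    have st1 : ∀ i : ℤ, dist (f (ξ i)) (ξ (i+1)) ≤ δ := by
      intro i
      rcases lt_trichotomy i 0 with hi | hi | hi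
      · rw [hneg i (by omega), dist_self]; exact hδ.le
      · subst hi; exact hjun.trans ((min_le_left _ _).trans hδ₀δ)
      · exact (hpos i (by omega)).trans ((hediv _).trans hδ₀δ)
    have st2 : Tendsto (fun i : ℤ => dist (f (ξ i)) (ξ (i + 1))) atBot (nhds 0) := by
      rw [Metric.tendsto_nhds]
      intro ε hε
      filter_upwards [eventually_le_atBot (-1 : ℤ)] with i hi
      rw [hneg i hi, dist_self, real_dist_zero le_rfl]
      exact hε
    have st3 : Tendsto (fun i : ℤ => dist (f (ξ i)) (ξ (i + 1))) atTop (nhds 0) := by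
      rw [Metric.tendsto_nhds]
      intro ε hε
      obtain ⟨N, hN⟩ := hsmall2 ε hε
      rw [eventually_atTop]
      refine ⟨(csum L N : ℤ) + 1, fun i hi => ?_⟩
      have hcs : (0:ℤ) ≤ (csum L N : ℤ) := by positivity
      have hi1 : 1 ≤ i := by omega
      have hjb : csum L N ≤ (i-1).toNat := by omega
      have hblk : N ≤ blk L (i-1).toNat := le_blk hL1 hjb
      have h2 : δ₀ / ((blk L (i-1).toNat : ℝ) + 1) ≤ δ₀ / ((N:ℝ)+1) := by
        apply div_le_div_of_nonneg_left hδ₀.le (by positivity)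
        exact_mod_cast Nat.succ_le_succ hblk
      rw [real_dist_zero dist_nonneg]
      exact lt_of_le_of_lt ((hpos i hi1).trans h2) hN
    obtain ⟨x, hxd, hxbot, hxtop⟩ := hshad ξ hmem ⟨st1, st2, st3⟩
    have hpx : ChainReach (⇑f) p x := by
      apply reach_of_backward f
      intro δ' hδ'
      rw [Metric.tendsto_nhds] at hxbot
      obtain ⟨I, hI⟩ := eventually_atBot.mp (hxbot δ' hδ')
      refine ⟨min I (-1), by omega, ξ (min I (-1)), ?_, ?_⟩
      · have hmem' : ξ (min I (-1)) ∈ Cset f p := by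
          rw [hvneg _ (by omega)]
          exact Cset_symm_iter_mem f hwC _
        exact hmem'.2.1
      · have := hI (min I (-1)) (min_le_left _ _)
        rw [real_dist_zero dist_nonneg] at this
        exact this.le
    have hxz : ChainReach (⇑f) x z := by
      apply reach_of_forward f
      intro δ' hδ'
      rw [Metric.tendsto_nhds] at hxtop
      obtain ⟨I, hI⟩ := eventually_atTop.mp (hxtop δ' hδ')
      set n := I.toNat with hn
      set t : ℤ := (csum L n : ℤ) + 1 with ht
      have hnle : (n:ℤ) ≤ (csum L n : ℤ) := by exact_mod_cast self_le_csum hL1 n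
      have htI : I ≤ t := by omega
      have ht1 : 1 ≤ t := by omega
      refine ⟨t, ht1, ?_⟩
      have hvt : ξ t = z := by
        rw [hvpos t ht1, show (t - 1).toNat = csum L n by omega, concatC_csum hL1 c n, hc0 n]
      have := hI t htI
      rw [real_dist_zero dist_nonneg, hvt] at this
      exact this.le
    exact hpx.trans hxz
  -- ================== Part 2 : ChainReach z p ==================
  have hzp : ChainReach (⇑f) z p := by
    set cR : ℕ → ℕ → X := fun n j => c n (k n - j) with hcRdef
    have hmatchR : ∀ n, cR n (L n) = cR (n+1) 0 := by
      intro n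
      show c n (k n - k n) = c (n+1) (k (n+1) - 0)
      rw [Nat.sub_self, Nat.sub_zero, hc0 n, hck (n+1)]
    set Θ : ℕ → X := concatC L cR with hΘdef
    have hstepR : ∀ m : ℕ, dist (f (Θ (m+1))) (Θ m) ≤ δ₀ / ((blk L m : ℝ) + 1) := by
      intro m
      obtain ⟨l, hl, e1, e2⟩ := concatC_key hL1 hmatchR m
      rw [hΘdef, e1, e2]
      show dist (f (c (blk L m) (k (blk L m) - (l+1)))) (c (blk L m) (k (blk L m) - l)) ≤ _
      have hlk : l < k (blk L m) := hl
      rw [show k (blk L m) - l = (k (blk L m) - (l+1)) + 1 by omega]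
      exact hchain _ _ (by omega)
    have hΘnear : ∀ m : ℕ, infDist (Θ m) (Cset f p) ≤ b := by
      intro m
      obtain ⟨l, hl, e1, -⟩ := concatC_key hL1 hmatchR m
      rw [hΘdef, e1]
      show infDist (c (blk L m) (k (blk L m) - l)) (Cset f p) ≤ b
      exact hnear _ _ (by omega)
    have hΘz : ∀ n : ℕ, Θ (csum L n) = z := by
      intro n
      rw [hΘdef, concatC_csum hL1 cR n]
      show c n (k n - 0) = z
      rw [Nat.sub_zero, hck n]
    set ξ : ℤ → X := fun i => if i < 0 then Θ ((-i).toNat - 1) else (⇑f)^[i.toNat] (f w)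
      with hξdef
    have hvneg : ∀ i : ℤ, i ≤ -1 → ξ i = Θ ((-i).toNat - 1) := by
      intro i hi; simp only [hξdef]; rw [if_pos (by omega)]
    have hvpos : ∀ i : ℤ, 0 ≤ i → ξ i = (⇑f)^[i.toNat] (f w) := by
      intro i hi; simp only [hξdef]; rw [if_neg (by omega)]
    have hfwC : f w ∈ Cset f p := Cset_apply_mem f hwC
    have hmem : ∀ i : ℤ, ξ i ∈ Nbhd b (Cset f p) := by
      intro i
      show infDist (ξ i) (Cset f p) ≤ b
      by_cases hi : i ≤ -1
      · rw [hvneg i hi]; exact hΘnear _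
      · rw [hvpos i (by omega), infDist_zero_of_mem (Cset_iter_mem f hfwC _)]
        exact hb.le
    have hneg : ∀ i : ℤ, i ≤ -2 →
        dist (f (ξ i)) (ξ (i+1)) ≤ δ₀ / ((blk L ((-i).toNat - 2) : ℝ) + 1) := by
      intro i hi
      rw [hvneg i (by omega), hvneg (i+1) (by omega),
        show (-(i+1)).toNat - 1 = (-i).toNat - 2 by omega,
        show (-i).toNat - 1 = ((-i).toNat - 2) + 1 by omega]
      exact hstepR _
    have hjun : dist (f (ξ (-1))) (ξ 0) ≤ δ₀ := by
      rw [hvneg (-1) (by omega), hvpos 0 (by omega)]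
      have e0 : ((-(-1:ℤ)).toNat - 1) = 0 := by omega
      rw [e0, show ((0:ℤ).toNat) = 0 from rfl]
      have hΘ0 : Θ 0 = z := by
        have := hΘz 0
        rwa [show csum L 0 = 0 from rfl] at this
      rw [hΘ0]
      show dist (f z) ((⇑f)^[0] (f w)) ≤ δ₀
      rw [Function.iterate_zero_apply]
      exact hsf z w (hzw.le.trans (min_le_right _ _))
    have hposs : ∀ i : ℤ, 0 ≤ i → dist (f (ξ i)) (ξ (i+1)) = 0 := by
      intro i hi
      rw [hvpos i hi, hvpos (i+1) (by omega),
        show (i+1).toNat = i.toNat + 1 by omega, Function.iterate_succ_apply', dist_self]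
    have st1 : ∀ i : ℤ, dist (f (ξ i)) (ξ (i+1)) ≤ δ := by
      intro i
      rcases lt_trichotomy i (-1) with hi | hi | hi
      · exact (hneg i (by omega)).trans ((hediv _).trans hδ₀δ)
      · subst hi; exact hjun.trans hδ₀δ
      · rw [hposs i (by omega)]; exact hδ.le
    have st3 : Tendsto (fun i : ℤ => dist (f (ξ i)) (ξ (i + 1))) atTop (nhds 0) := by
      rw [Metric.tendsto_nhds]
      intro ε hε
      filter_upwards [eventually_ge_atTop (0 : ℤ)] with i hi
      rw [hposs i hi, real_dist_zero le_rfl]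
      exact hε
    have st2 : Tendsto (fun i : ℤ => dist (f (ξ i)) (ξ (i + 1))) atBot (nhds 0) := by
      rw [Metric.tendsto_nhds]
      intro ε hε
      obtain ⟨N, hN⟩ := hsmall2 ε hε
      rw [eventually_atBot]
      refine ⟨-(csum L N : ℤ) - 2, fun i hi => ?_⟩
      have hcs : (0:ℤ) ≤ (csum L N : ℤ) := by positivity
      have hi2 : i ≤ -2 := by omega
      have hjb : csum L N ≤ (-i).toNat - 2 := by omega
      have hblk : N ≤ blk L ((-i).toNat - 2) := le_blk hL1 hjb
      have h2 : δ₀ / ((blk L ((-i).toNat - 2) : ℝ) + 1) ≤ δ₀ / ((N:ℝ)+1) := by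
        apply div_le_div_of_nonneg_left hδ₀.le (by positivity)
        exact_mod_cast Nat.succ_le_succ hblk
      rw [real_dist_zero dist_nonneg]
      exact lt_of_le_of_lt ((hneg i hi2).trans h2) hN
    obtain ⟨y, hyd, hybot, hytop⟩ := hshad ξ hmem ⟨st1, st2, st3⟩
    have hzy : ChainReach (⇑f) z y := by
      apply reach_of_backward f
      intro δ' hδ'
      rw [Metric.tendsto_nhds] at hybot
      obtain ⟨I, hI⟩ := eventually_atBot.mp (hybot δ' hδ')
      set n := (-I).toNat with hn
      set t : ℤ := -(csum L n : ℤ) - 1 with ht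
      have hnle : (n:ℤ) ≤ (csum L n : ℤ) := by exact_mod_cast self_le_csum hL1 n
      have htI : t ≤ I := by omega
      refine ⟨t, by omega, z, hz, ?_⟩
      have hvt : ξ t = z := by
        rw [hvneg t (by omega), show ((-t).toNat - 1) = csum L n by omega, hΘz n]
      have := hI t htI
      rw [real_dist_zero dist_nonneg, hvt] at this
      exact this.le
    have hyp : ChainReach (⇑f) y p := by
      apply reach_of_forward' f
      intro δ' hδ'
      rw [Metric.tendsto_nhds] at hytop
      obtain ⟨I, hI⟩ := eventually_atTop.mp (hytop δ' hδ')
      set t : ℤ := max I 1 with ht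
      refine ⟨t, le_max_right _ _, ξ t, ?_, ?_⟩
      · have hmem' : ξ t ∈ Cset f p := by
          rw [hvpos t (by omega)]
          exact Cset_iter_mem f hfwC _
        exact hmem'.2.2
      · have := hI t (le_max_left _ _)
        rw [real_dist_zero dist_nonneg] at this
        exact this.le
    exact hzy.trans hyp
  exact ⟨hz, hpz, hzp⟩

end Main

theorem stmt2 [MetricSpace X] [CompactSpace X] (f : X ≃ₜ X)
    (C : Set X) (hC : IsChainComponent (⇑f) C)
    (b : ℝ) (hb : 0 < b) (hL : LShadowsOn f (Nbhd b C)) :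
    IsClopen {x : ChainRec (⇑f) | (x : X) ∈ C} := by
  obtain ⟨p, hp, hCdef⟩ := hC
  have hCeq : C = Cset f p := hCdef
  subst hCeq
  constructor
  · exact (isClosed_Cset f p).preimage continuous_subtype_val
  · obtain ⟨η, hη, hmain⟩ := main_open f p hp hb hL
    have hset : {x : ChainRec (⇑f) | (x : X) ∈ Cset f p} =
        Subtype.val ⁻¹' {u : X | infDist u (Cset f p) < η} := by
      ext x
      simp only [mem_setOf_eq, mem_preimage]
      constructor
      · intro hx
        show infDist (x : X) (Cset f p) < η
        rw [infDist_zero_of_mem hx]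
        exact hη
      · intro hx
        exact hmain x x.2 hx
    rw [hset]
    exact (isOpen_lt (continuous_infDist_pt _) continuous_const).preimage continuous_subtype_val
end

section
/- Let f : X → X be a homeomorphism of a compact metric space and C a chain component of f. If C is both an initial and a terminal chain component and C is clopen in CR(f), then C is clopen in X. -/
open Metric Filter Topology Set

variable {X : Type*}

set_option linter.unusedSectionVars false

section Aux
variable [MetricSpace X]

/-- One-δ-level chain reachability. -/
def CRd (f : X → X) (δ : ℝ) (x y : X) : Prop :=
  ∃ k ≥ 1, ∃ c : ℕ → X, c 0 = x ∧ c k = y ∧ IsDeltaChain f δ k c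

lemma crd_mono {f : X → X} {δ δ' : ℝ} {x y : X} (h : δ ≤ δ') (hc : CRd f δ x y) :
    CRd f δ' x y := by
  obtain ⟨k, hk, c, h0, hkc, hch⟩ := hc
  exact ⟨k, hk, c, h0, hkc, fun i hi => (hch i hi).trans h⟩

lemma crd_start {f : X → X} {δ δ' : ℝ} {x x' y : X} (hc : CRd f δ x y)
    (hd : dist (f x') (f x) ≤ δ') : CRd f (δ + δ') x' y := by
  obtain ⟨k, hk, c, h0, hkc, hch⟩ := hc
  refine ⟨k, hk, fun i => if i = 0 then x' else c i, by simp, by simp [show k ≠ 0 by omega, hkc], ?_⟩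
  intro i hi
  rcases Nat.eq_zero_or_pos i with rfl | hip
  · simp only [if_pos rfl, if_neg one_ne_zero]
    calc dist (f x') (c 1) ≤ dist (f x') (f x) + dist (f x) (c 1) := dist_triangle _ _ _
      _ ≤ δ' + δ := by
          have := hch 0 hi; rw [h0] at this; exact add_le_add hd this
      _ = δ + δ' := add_comm _ _
  · simp only [if_neg hip.ne', if_neg (Nat.succ_ne_zero i)]
    exact (hch i hi).trans (by nlinarith [dist_nonneg (x := f x') (y := f x), (le_refl δ)] )

lemma crd_end {f : X → X} {δ δ' : ℝ} {x y y' : X} (hc : CRd f δ x y)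
    (hd : dist y y' ≤ δ') (hδ' : 0 ≤ δ') : CRd f (δ + δ') x y' := by
  obtain ⟨k, hk, c, h0, hkc, hch⟩ := hc
  refine ⟨k, hk, fun i => if i = k then y' else c i, by simp [show ¬ (0 = k) by omega, h0], by simp, ?_⟩
  intro i hi
  by_cases hik : i + 1 = k
  · simp only [if_neg (by omega : i ≠ k), if_pos hik]
    calc dist (f (c i)) y' ≤ dist (f (c i)) y + dist y y' := dist_triangle _ _ _
      _ ≤ δ + δ' := add_le_add (by rw [← hkc, ← hik]; exact hch i hi) hd
  · simp only [if_neg (by omega : i ≠ k), if_neg hik]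
    exact (hch i hi).trans (by linarith)

/-- Chain via an exact orbit segment: jump from `x` near `f u`, follow the orbit of `u`,
then jump to `y` near `f^[m+2] u`. -/
lemma crd_seg (f : X → X) {δ : ℝ} (x y u : X) (m : ℕ)
    (h1 : dist (f x) (f u) ≤ δ) (h2 : dist (f^[m + 2] u) y ≤ δ) : CRd f δ x y := by
  refine ⟨m + 2, by omega, fun i => if i = 0 then x else if i = m + 2 then y else f^[i] u,
    by simp, by simp, ?_⟩
  intro i hi
  rcases Nat.eq_zero_or_pos i with rfl | hip
  · simp only [if_pos rfl, if_neg one_ne_zero, if_neg (by omega : (1:ℕ) ≠ m + 2)]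
    simpa using h1
  · by_cases him : i + 1 = m + 2
    · simp only [if_neg hip.ne', if_neg (by omega : i ≠ m + 2), if_pos him]
      have : f (f^[i] u) = f^[m + 2] u := by
        rw [← him, Function.iterate_succ_apply']
      rw [this]; exact h2
    · simp only [if_neg hip.ne', if_neg (by omega : i ≠ m + 2), if_neg (Nat.succ_ne_zero i),
        if_neg him]
      rw [← Function.iterate_succ_apply' f i u]
      simpa using le_trans dist_nonneg h1

lemma chainReach_trans {f : X → X} {x y z : X} (h1 : ChainReach f x y)
    (h2 : ChainReach f y z) : ChainReach f x z := by
  intro δ hδ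
  obtain ⟨k1, hk1, c, hc0, hck, hc⟩ := h1 δ hδ
  obtain ⟨k2, hk2, d, hd0, hdk, hd⟩ := h2 δ hδ
  refine ⟨k1 + k2, by omega, fun i => if i ≤ k1 then c i else d (i - k1), by simp [hc0], ?_, ?_⟩
  · simp only [if_neg (by omega : ¬ k1 + k2 ≤ k1)]
    simpa using hdk
  · intro i hi
    by_cases h : i + 1 ≤ k1
    · simp only [if_pos (by omega : i ≤ k1), if_pos h]
      exact hc i (by omega)
    · by_cases h' : i ≤ k1
      · have : i = k1 := by omega
        subst this
        simp only [if_pos le_rfl, if_neg h, hck, ← hd0]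
        have : i + 1 - i = 1 := by omega
        rw [this]
        exact hd 0 (by omega)
      · simp only [if_neg h', if_neg h]
        have : i + 1 - k1 = (i - k1) + 1 := by omega
        rw [this]
        exact hd (i - k1) (by omega)

variable [CompactSpace X]

lemma exists_mod (f : X → X) (hf : Continuous f) {δ : ℝ} (hδ : 0 < δ) :
    ∃ η > 0, ∀ a b : X, dist a b < η → dist (f a) (f b) ≤ δ := by
  obtain ⟨η, hη, h⟩ := Metric.uniformContinuous_iff.mp
    (CompactSpace.uniformContinuous_of_continuous hf) δ hδ
  exact ⟨η, hη, fun a b hab => (h hab).le⟩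

/-- If `(aₙ, bₙ) → (x, y)` with `ChainReach f aₙ bₙ`, then `ChainReach f x y`. -/
lemma chainReach_of_approx (f : X → X) (hf : Continuous f) (x y : X)
    (h : ∀ ε > 0, ∃ a b, dist x a < ε ∧ dist y b < ε ∧ ChainReach f a b) :
    ChainReach f x y := by
  intro δ hδ
  have h3 : 0 < δ / 3 := by linarith
  obtain ⟨η, hη, hmod⟩ := exists_mod f hf h3
  obtain ⟨a, b, ha, hb, hr⟩ := h (min η (δ / 3)) (lt_min hη h3)
  have hc : CRd f (δ / 3) a b := hr (δ / 3) h3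
  have h1 : CRd f (δ / 3 + δ / 3) x b :=
    crd_start hc (hmod x a (ha.trans_le (min_le_left _ _)))
  have h2 : CRd f (δ / 3 + δ / 3 + δ / 3) x y :=
    crd_end h1 (by rw [dist_comm]; exact (hb.trans_le (min_le_right _ _)).le) h3.le
  exact crd_mono (by linarith) h2

/-- A cluster point of the forward orbit is chain-reachable. -/
lemma cluster_reach (f : X → X) (y z : X) (φ : ℕ → ℕ) (hφ : StrictMono φ)
    (hz : Tendsto (fun j => f^[φ j] y) atTop (𝓝 z)) : ChainReach f y z := by
  intro δ hδ
  obtain ⟨N, hN⟩ := (Metric.tendsto_atTop.mp hz) δ hδ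
  set j := max N 2 with hj
  have hφj : 2 ≤ φ j := le_trans (le_max_right N 2) hφ.le_apply
  have hd : dist (f^[φ j] y) z ≤ δ := (hN j (le_max_left _ _)).le
  show CRd f δ y z
  refine crd_seg f y z y (φ j - 2) (by simpa using hδ.le) ?_
  rwa [Nat.sub_add_cancel hφj]

/-- A cluster point of a forward orbit is chain recurrent. -/
lemma cluster_chainRec (f : X → X) (hf : Continuous f) (y z : X) (φ : ℕ → ℕ)
    (hφ : StrictMono φ) (hz : Tendsto (fun j => f^[φ j] y) atTop (𝓝 z)) :
    ChainReach f z z := by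
  intro δ hδ
  obtain ⟨η, hη, hmod⟩ := exists_mod f hf hδ
  obtain ⟨N, hN⟩ := (Metric.tendsto_atTop.mp hz) (min η δ) (lt_min hη hδ)
  set a := φ N with ha
  set j2 := N + a + 2 with hj2
  have hb : a + 2 ≤ φ j2 := by
    have hle : j2 ≤ φ j2 := hφ.le_apply
    omega
  show CRd f δ z z
  refine crd_seg f z z (f^[a] y) (φ j2 - a - 2) ?_ ?_
  · refine hmod z (f^[a] y) ?_
    rw [dist_comm]
    exact (hN N le_rfl).trans_le (min_le_left _ _)
  · have : φ j2 - a - 2 + 2 + a = φ j2 := by omega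
    rw [← Function.iterate_add_apply, this]
    exact ((hN j2 (by omega)).trans_le (min_le_right _ _)).le


lemma iter_cancel (f : X ≃ₜ X) {j m : ℕ} (h : j ≤ m) (x : X) :
    (⇑f.symm)^[j] ((⇑f)^[m] x) = (⇑f)^[m - j] x := by
  have hm : (⇑f)^[m] x = (⇑f)^[j] ((⇑f)^[m - j] x) := by
    rw [← Function.iterate_add_apply]; congr 1; omega
  rw [hm]
  exact (Function.LeftInverse.iterate f.symm_apply_apply j) _

lemma iter_cancel' (f : X ≃ₜ X) {p q : ℕ} (h : p ≤ q) (z : X) :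
    (⇑f)^[p] ((⇑f.symm)^[q] z) = (⇑f.symm)^[q - p] z := by
  have hm : (⇑f.symm)^[q] z = (⇑f.symm)^[p] ((⇑f.symm)^[q - p] z) := by
    rw [← Function.iterate_add_apply]; congr 1; omega
  rw [hm]
  exact (Function.LeftInverse.iterate f.apply_symm_apply p) _

/-- A point that the backward orbit of `z` clusters at chain-reaches `z`. -/
lemma back_cluster_reach (f : X ≃ₜ X) (hf : Continuous ⇑f) (z w : X) (ψ : ℕ → ℕ)
    (hψ : StrictMono ψ)
    (hw : Tendsto (fun j => (⇑f.symm)^[ψ j + 1] z) atTop (𝓝 w)) : ChainReach (⇑f) w z := by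
  intro δ hδ
  obtain ⟨η, hη, hmod⟩ := exists_mod (⇑f) hf hδ
  obtain ⟨N, hN⟩ := (Metric.tendsto_atTop.mp hw) η hη
  set j := max N 1 with hj
  have hψj : 1 ≤ ψ j := le_trans (le_max_right N 1) hψ.le_apply
  show CRd (⇑f) δ w z
  refine crd_seg (⇑f) w z ((⇑f.symm)^[ψ j + 1] z) (ψ j - 1) ?_ ?_
  · refine hmod w _ ?_
    rw [dist_comm]
    exact hN j (le_max_left _ _)
  · have h1 : ψ j - 1 + 2 = ψ j + 1 := by omega
    rw [h1, iter_cancel' f le_rfl z]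
    simpa using hδ.le

/-- A point that the backward orbit of `z` clusters at is chain recurrent. -/
lemma back_cluster_chainRec (f : X ≃ₜ X) (hf : Continuous ⇑f) (z w : X) (ψ : ℕ → ℕ)
    (hψ : StrictMono ψ)
    (hw : Tendsto (fun j => (⇑f.symm)^[ψ j + 1] z) atTop (𝓝 w)) : ChainReach (⇑f) w w := by
  intro δ hδ
  obtain ⟨η, hη, hmod⟩ := exists_mod (⇑f) hf hδ
  obtain ⟨N, hN⟩ := (Metric.tendsto_atTop.mp hw) (min η δ) (lt_min hη hδ)
  set a := ψ N + 1 with ha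
  set j2 := N + a + 2 with hj2
  set b := ψ j2 + 1 with hb
  have hab : a + 2 ≤ b := by
    have hle : j2 ≤ ψ j2 := hψ.le_apply
    omega
  show CRd (⇑f) δ w w
  refine crd_seg (⇑f) w w ((⇑f.symm)^[b] z) (b - a - 2) ?_ ?_
  · refine hmod w _ ?_
    rw [dist_comm]
    exact (hN j2 (by omega)).trans_le (min_le_left _ _)
  · have h1 : b - a - 2 + 2 = b - a := by omega
    rw [h1, iter_cancel' f (by omega) z]
    have h2 : b - (b - a) = a := by omega
    rw [h2]
    exact ((hN N le_rfl).trans_le (min_le_right _ _)).le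

end Aux

theorem stmt8 [MetricSpace X] [CompactSpace X] (f : X ≃ₜ X)
    (C : Set X) (hC : IsChainComponent (⇑f) C)
    (hter : ChainStable (⇑f) C) (hini : InitialStable (⇑f) C)
    (hclopen : IsClopen {x : ChainRec (⇑f) | (x : X) ∈ C}) :
    IsClopen C := by
  obtain ⟨x₀, hx₀, hCeq⟩ := hC
  have hfc : Continuous ⇑f := f.continuous
  have hmemC : ∀ y, y ∈ C ↔ ChainReach (⇑f) y y ∧ ChainReach (⇑f) x₀ y ∧ ChainReach (⇑f) y x₀ := by
    intro y; rw [hCeq]; exact Iff.rfl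
  have hx₀C : x₀ ∈ C := (hmemC x₀).mpr ⟨hx₀, hx₀, hx₀⟩
  have hCne : C.Nonempty := ⟨x₀, hx₀C⟩
  have hCclosed : IsClosed C := by
    rw [← isSeqClosed_iff_isClosed]
    intro u p hu hup
    rw [hmemC]
    have hnear : ∀ ε > (0:ℝ), ∃ n, dist p (u n) < ε := by
      intro ε hε
      obtain ⟨N, hN⟩ := Metric.tendsto_atTop.mp hup ε hε
      exact ⟨N, by rw [dist_comm]; exact hN N le_rfl⟩
    refine ⟨?_, ?_, ?_⟩
    · refine chainReach_of_approx (⇑f) hfc p p (fun ε hε => ?_)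
      obtain ⟨n, hn⟩ := hnear ε hε
      exact ⟨u n, u n, hn, hn, ((hmemC _).mp (hu n)).1⟩
    · refine chainReach_of_approx (⇑f) hfc x₀ p (fun ε hε => ?_)
      obtain ⟨n, hn⟩ := hnear ε hε
      exact ⟨x₀, u n, by simpa using hε, hn, ((hmemC _).mp (hu n)).2.1⟩
    · refine chainReach_of_approx (⇑f) hfc p x₀ (fun ε hε => ?_)
      obtain ⟨n, hn⟩ := hnear ε hε
      exact ⟨u n, x₀, hn, by simpa using hε, ((hmemC _).mp (hu n)).2.2⟩
  have hCRclosed : IsClosed (ChainRec (⇑f)) := by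
    rw [← isSeqClosed_iff_isClosed]
    intro u p hu hup
    refine chainReach_of_approx (⇑f) hfc p p (fun ε hε => ?_)
    obtain ⟨N, hN⟩ := Metric.tendsto_atTop.mp hup ε hε
    exact ⟨u N, u N, by rw [dist_comm]; exact hN N le_rfl,
      by rw [dist_comm]; exact hN N le_rfl, hu N⟩
  haveI hCRcs : CompactSpace (ChainRec (⇑f)) := isCompact_iff_compactSpace.mp hCRclosed.isCompact
  set K : Set X := Subtype.val '' ({x : ChainRec (⇑f) | (x : X) ∈ C}ᶜ) with hKdef
  have hKcomp : IsCompact K := (hclopen.2.isClosed_compl.isCompact).image continuous_subtype_val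
  have hKmem : ∀ w, w ∈ K ↔ (w ∈ ChainRec (⇑f) ∧ w ∉ C) := by
    intro w
    constructor
    · rintro ⟨⟨v, hv⟩, hvmem, rfl⟩; exact ⟨hv, hvmem⟩
    · rintro ⟨h1, h2⟩; exact ⟨⟨w, h1⟩, h2, rfl⟩
  have hfC : ∀ z ∈ C, (⇑f) z ∈ C := by
    intro z hz
    refine hter z hz _ (fun δ hδ =>
      ⟨1, le_rfl, fun i => if i = 0 then z else f z, by simp, by simp, ?_⟩)
    intro i hi
    have h0 : i = 0 := by omega
    subst h0
    simp [hδ.le]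
  have hiterC : ∀ z ∈ C, ∀ j, (⇑f)^[j] z ∈ C := by
    intro z hz j
    induction j with
    | zero => simpa
    | succ n ih => rw [Function.iterate_succ_apply']; exact hfC _ ih
  rcases eq_empty_or_nonempty K with hKe | hKne
  · have hCR_C : ∀ z, z ∈ ChainRec (⇑f) → z ∈ C := by
      intro z hz
      by_contra h
      have : z ∈ K := (hKmem z).mpr ⟨hz, h⟩
      rw [hKe] at this
      exact this
    have hCuniv : C = univ := eq_univ_of_forall (fun y => by
      obtain ⟨z, -, φ, hφ, hz⟩ :=
        isCompact_univ.tendsto_subseq (x := fun i => (⇑f)^[i] y) (fun n => mem_univ _)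
      have hzCR : z ∈ ChainRec (⇑f) := cluster_chainRec (⇑f) hfc y z φ hφ hz
      exact hini z (hCR_C z hzCR) y (cluster_reach (⇑f) y z φ hφ hz))
    rw [hCuniv]
    exact isClopen_univ
  · obtain ⟨w₀, hw₀K, hmin⟩ := hKcomp.exists_isMinOn hKne (continuous_infDist_pt C).continuousOn
    have hw₀ := (hKmem w₀).mp hw₀K
    have hε : 0 < infDist w₀ C := (hCclosed.notMem_iff_infDist_pos hCne).mp hw₀.2
    set ε := infDist w₀ C with hεdef
    have hgap : ∀ w, w ∈ ChainRec (⇑f) → infDist w C < ε → w ∈ C := by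
      intro w hw hd
      by_contra h
      exact absurd hd (not_lt.mpr (hmin ((hKmem w).mpr ⟨hw, h⟩)))
    have hCopen : IsOpen C := by
      rw [Metric.isOpen_iff]
      intro x hx
      by_contra hcon
      push_neg at hcon
      have hy : ∀ n : ℕ, ∃ y, dist y x < min (1/(n+1 : ℝ)) (ε/2) ∧ y ∉ C := by
        intro n
        have h1 : (0:ℝ) < min (1/(n+1 : ℝ)) (ε/2) := lt_min (by positivity) (by linarith)
        obtain ⟨y, hy1, hy2⟩ := not_subset.mp (hcon _ h1)
        exact ⟨y, mem_ball.mp hy1, hy2⟩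
      choose y hyd hyC using hy
      have hyx : Tendsto y atTop (𝓝 x) := by
        rw [tendsto_iff_dist_tendsto_zero]
        refine squeeze_zero (fun n => dist_nonneg) (fun n => ?_)
          tendsto_one_div_add_atTop_nhds_zero_nat
        exact ((hyd n).le.trans (min_le_left _ _))
      have hk : ∀ n, ∃ i, ε/2 ≤ infDist ((⇑f)^[i] (y n)) C := by
        intro n
        by_contra h
        push_neg at h
        obtain ⟨z, -, φ, hφ, hz⟩ :=
          isCompact_univ.tendsto_subseq (x := fun i => (⇑f)^[i] (y n)) (fun i => mem_univ _)
        have hzCR : z ∈ ChainRec (⇑f) := cluster_chainRec (⇑f) hfc (y n) z φ hφ hz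
        have hzd : infDist z C ≤ ε/2 := by
          refine le_of_tendsto (((continuous_infDist_pt C).tendsto z).comp hz) ?_
          exact Eventually.of_forall (fun j => (h (φ j)).le)
        have hzC : z ∈ C := hgap z hzCR (by linarith)
        exact hyC n (hini z hzC (y n) (cluster_reach (⇑f) (y n) z φ hφ hz))
      set k : ℕ → ℕ := fun n => Nat.find (hk n) with hkdef
      have hkspec : ∀ n, ε/2 ≤ infDist ((⇑f)^[k n] (y n)) C := fun n => Nat.find_spec (hk n)
      have hkmin : ∀ n, ∀ i < k n, infDist ((⇑f)^[i] (y n)) C < ε/2 :=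
        fun n i hi => lt_of_not_ge (Nat.find_min (hk n) hi)
      have hk1 : ∀ n, 1 ≤ k n := by
        intro n
        by_contra hcc
        have h0 : k n = 0 := by omega
        have h2 := hkspec n
        rw [h0] at h2
        simp only [Function.iterate_zero_apply] at h2
        have h3 : ε/2 ≤ dist (y n) x := le_trans h2 (infDist_le_dist_of_mem hx)
        have h4 := (hyd n).trans_le (min_le_right _ _)
        linarith
      have hktop : Tendsto k atTop atTop := by
        rw [Filter.tendsto_atTop]
        intro j
        have hev : ∀ i : ℕ, ∀ᶠ n in atTop, infDist ((⇑f)^[i] (y n)) C < ε/2 := by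
          intro i
          have hlim : Tendsto (fun n => (⇑f)^[i] (y n)) atTop (𝓝 ((⇑f)^[i] x)) :=
            ((hfc.iterate i).tendsto x).comp hyx
          have hlim2 : Tendsto (fun n => infDist ((⇑f)^[i] (y n)) C) atTop (𝓝 0) := by
            have h5 := ((continuous_infDist_pt C).tendsto _).comp hlim
            rwa [infDist_zero_of_mem (hiterC x hx i)] at h5
          exact hlim2.eventually_lt_const (by linarith)
        have hall : ∀ᶠ n in atTop, ∀ i ∈ Set.Iic j, infDist ((⇑f)^[i] (y n)) C < ε/2 :=
          (eventually_all_finite (Set.finite_Iic j)).mpr (fun i _ => hev i)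
        refine hall.mono (fun n hn => ?_)
        by_contra h
        push_neg at h
        exact absurd (hkspec n) (not_le.mpr (hn (k n) (by simp; omega)))
      obtain ⟨z, -, φ, hφ, hz⟩ :=
        isCompact_univ.tendsto_subseq (x := fun n => (⇑f)^[k n] (y n)) (fun n => mem_univ _)
      have hzfar : ε/2 ≤ infDist z C := by
        refine ge_of_tendsto (((continuous_infDist_pt C).tendsto z).comp hz) ?_
        exact Eventually.of_forall (fun n => hkspec (φ n))
      have hback : ∀ j : ℕ, infDist ((⇑f.symm)^[j+1] z) C ≤ ε/2 := by
        intro j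
        have hlim : Tendsto (fun n => (⇑f.symm)^[j+1] ((⇑f)^[k (φ n)] (y (φ n)))) atTop
            (𝓝 ((⇑f.symm)^[j+1] z)) :=
          ((f.symm.continuous.iterate (j+1)).tendsto z).comp hz
        refine le_of_tendsto (((continuous_infDist_pt C).tendsto _).comp hlim) ?_
        have hev : ∀ᶠ n in atTop, j + 1 ≤ k (φ n) :=
          (hktop.comp hφ.tendsto_atTop).eventually_ge_atTop (j+1)
        refine hev.mono (fun n hn => ?_)
        simp only [Function.comp_apply]
        rw [iter_cancel f hn]
        exact (hkmin (φ n) _ (by omega)).le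
      obtain ⟨w, -, ψ, hψ, hw⟩ :=
        isCompact_univ.tendsto_subseq (x := fun j => (⇑f.symm)^[j+1] z) (fun j => mem_univ _)
      have hwCR : ChainReach (⇑f) w w := back_cluster_chainRec f hfc z w ψ hψ hw
      have hwd : infDist w C ≤ ε/2 := by
        refine le_of_tendsto (((continuous_infDist_pt C).tendsto w).comp hw) ?_
        exact Eventually.of_forall (fun j => hback (ψ j))
      have hwC : w ∈ C := hgap w hwCR (by linarith)
      have hzC : z ∈ C := hter w hwC z (back_cluster_reach f hfc z w ψ hψ hw)
      have hz0 : infDist z C = 0 := infDist_zero_of_mem hzC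
      linarith
    exact ⟨hCclosed, hCopen⟩
end
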